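/- The category of abelian group objects in the category of small groupoids is equivalent to the category of chain complexes of abelian groups concentrated in degrees 0 and 1. The equivalence sends an abelian group object G in groupoids to its Moore chain complex ker(δ₁) → G₀ given by δ₀. -/

import Mathlib

open CategoryTheory

/-- An *abelian group object in the category of small groupoids*, presented as a
groupoid (objects `C₀`, morphisms `C₁`, source `src = δ₀`, target `tgt = δ₁`,
identities `e`, composition `comp`, inverses `inv`) together with abelian group
structures on `C₀` and `C₁` for which all structure maps are additive
(equivalently, addition is a functor). -/
structure AbGpdObj : Type 1 where
  C₀ : Type
  C₁ : Type
  [grp₀ : AddCommGroup C₀]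
  [grp₁ : AddCommGroup C₁]
  src : C₁ →+ C₀
  tgt : C₁ →+ C₀
  e : C₀ →+ C₁
  comp : C₁ → C₁ → C₁
  inv : C₁ → C₁
  src_e : ∀ x, src (e x) = x
  tgt_e : ∀ x, tgt (e x) = x
  src_comp : ∀ f g, src f = tgt g → src (comp f g) = src g
  tgt_comp : ∀ f g, src f = tgt g → tgt (comp f g) = tgt f
  comp_assoc : ∀ f g h, src f = tgt g → src g = tgt h →
    comp (comp f g) h = comp f (comp g h)
  comp_e : ∀ f, comp f (e (src f)) = f
  e_comp : ∀ f, comp (e (tgt f)) f = f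
  src_inv : ∀ f, src (inv f) = tgt f
  tgt_inv : ∀ f, tgt (inv f) = src f
  comp_inv : ∀ f, comp f (inv f) = e (tgt f)
  inv_comp : ∀ f, comp (inv f) f = e (src f)
  comp_add : ∀ f g f' g', src f = tgt g → src f' = tgt g' →
    comp (f + f') (g + g') = comp f g + comp f' g'

attribute [instance] AbGpdObj.grp₀ AbGpdObj.grp₁

/-- Morphisms of abelian group objects in groupoids: additive functors. -/
@[ext] structure AbGpdHom (G H : AbGpdObj) where
  f₀ : G.C₀ →+ H.C₀
  f₁ : G.C₁ →+ H.C₁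
  comm_src : ∀ a, H.src (f₁ a) = f₀ (G.src a)
  comm_tgt : ∀ a, H.tgt (f₁ a) = f₀ (G.tgt a)
  comm_e : ∀ x, f₁ (G.e x) = H.e (f₀ x)
  comm_comp : ∀ f g, G.src f = G.tgt g → f₁ (G.comp f g) = H.comp (f₁ f) (f₁ g)

instance : Category AbGpdObj where
  Hom := AbGpdHom
  id G := ⟨AddMonoidHom.id _, AddMonoidHom.id _, fun _ => rfl, fun _ => rfl,
    fun _ => rfl, fun _ _ _ => rfl⟩
  comp {G H K} φ ψ := ⟨ψ.f₀.comp φ.f₀, ψ.f₁.comp φ.f₁,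
    fun a => by simp [ψ.comm_src, φ.comm_src],
    fun a => by simp [ψ.comm_tgt, φ.comm_tgt],
    fun x => by simp [φ.comm_e, ψ.comm_e],
    fun f g h => by
      simp only [AddMonoidHom.coe_comp, Function.comp_apply]
      rw [φ.comm_comp f g h, ψ.comm_comp]
      rw [φ.comm_src, φ.comm_tgt, h]⟩
  id_comp φ := rfl
  comp_id φ := rfl
  assoc φ ψ χ := rfl

/-- A *1-truncated chain complex of abelian groups*: a homomorphism
`∂ : F₁ → F₀` of abelian groups (a chain complex concentrated in
degrees 0 and 1). -/
structure Ch01 : Type 1 where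
  F₀ : Type
  F₁ : Type
  [g₀ : AddCommGroup F₀]
  [g₁ : AddCommGroup F₁]
  d : F₁ →+ F₀

attribute [instance] Ch01.g₀ Ch01.g₁

/-- Morphisms of 1-truncated chain complexes: chain maps. -/
@[ext] structure Ch01Hom (C D : Ch01) where
  f₀ : C.F₀ →+ D.F₀
  f₁ : C.F₁ →+ D.F₁
  comm : ∀ a, D.d (f₁ a) = f₀ (C.d a)

instance : Category Ch01 where
  Hom := Ch01Hom
  id C := ⟨AddMonoidHom.id _, AddMonoidHom.id _, fun _ => rfl⟩
  comp φ ψ := ⟨ψ.f₀.comp φ.f₀, ψ.f₁.comp φ.f₁,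
    fun a => by simp [ψ.comm, φ.comm]⟩
  id_comp φ := rfl
  comp_id φ := rfl
  assoc φ ψ χ := rfl

/-- The *Moore complex* functor, sending an abelian group object `G` in
groupoids to the 1-truncated chain complex `ker δ₁ → G₀` given by `δ₀`. -/
def Moore : AbGpdObj ⥤ Ch01 where
  obj G :=
    { F₀ := G.C₀
      F₁ := ↥G.tgt.ker
      d := G.src.comp G.tgt.ker.subtype }
  map {G H} φ :=
    { f₀ := φ.f₀
      f₁ := AddMonoidHom.codRestrict (φ.f₁.comp G.tgt.ker.subtype) H.tgt.ker
        (fun a => by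
          have ha : G.tgt (a : G.C₁) = 0 := a.2
          simp [AddMonoidHom.mem_ker, φ.comm_tgt, ha])
      comm := fun a => by
        exact φ.comm_src (a : G.C₁) }
  map_id G := by
    apply Ch01Hom.ext
    · rfl
    · apply AddMonoidHom.ext; intro a; apply Subtype.ext; rfl
  map_comp φ ψ := by
    apply Ch01Hom.ext
    · rfl
    · apply AddMonoidHom.ext; intro a; apply Subtype.ext; rfl

section Aux

/-- Eckmann–Hilton: composition in an abelian group object in groupoids is
determined by the additive structure. -/
lemma AbGpdObj.comp_eq (G : AbGpdObj) (f g : G.C₁) (h : G.src f = G.tgt g) :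
    G.comp f g = f + g - G.e (G.src f) := by
  have htg : G.tgt (g - G.e (G.src f)) = 0 := by
    simp [h, G.tgt_e]
  have h0 : G.comp 0 (g - G.e (G.src f)) = g - G.e (G.src f) := by
    have := G.e_comp (g - G.e (G.src f))
    rwa [htg, map_zero] at this
  have key := G.comp_add f (G.e (G.src f)) 0 (g - G.e (G.src f))
    (by rw [G.tgt_e]) (by rw [map_zero, htg])
  rw [add_zero, show G.e (G.src f) + (g - G.e (G.src f)) = g from by abel] at key
  rw [key, G.comp_e, h0]
  abel

/-- Projection `f ↦ f - e (tgt f)` onto the kernel of `tgt`. -/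
def AbGpdObj.proj (G : AbGpdObj) : G.C₁ →+ G.tgt.ker :=
  AddMonoidHom.codRestrict (AddMonoidHom.id G.C₁ - G.e.comp G.tgt) _
    (fun f => by simp [AddMonoidHom.mem_ker, G.tgt_e])

@[simp] lemma AbGpdObj.proj_coe (G : AbGpdObj) (f : G.C₁) :
    (G.proj f : G.C₁) = f - G.e (G.tgt f) := rfl

lemma AbGpdObj.proj_subtype (G : AbGpdObj) (f : G.C₁) :
    G.tgt.ker.subtype (G.proj f) = f - G.e (G.tgt f) := rfl

/-- The inverse construction: an abelian group object in groupoids from a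
1-truncated chain complex. -/
def InvObj (C : Ch01) : AbGpdObj where
  C₀ := C.F₀
  C₁ := C.F₁ × C.F₀
  src := (AddMonoidHom.snd _ _) + C.d.comp (AddMonoidHom.fst _ _)
  tgt := AddMonoidHom.snd _ _
  e := (0 : C.F₀ →+ C.F₁).prod (AddMonoidHom.id _)
  comp p q := (p.1 + q.1, p.2)
  inv p := (-p.1, p.2 + C.d p.1)
  src_e x := by simp
  tgt_e x := by simp
  src_comp p q h := by
    replace h : p.2 + C.d p.1 = q.2 := h
    show p.2 + C.d (p.1 + q.1) = q.2 + C.d q.1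
    rw [map_add, ← add_assoc, h]
  tgt_comp p q h := rfl
  comp_assoc p q r h1 h2 := by simp [add_assoc]
  comp_e p := by simp
  e_comp p := by simp
  src_inv p := by simp
  tgt_inv p := by simp
  comp_inv p := by simp
  inv_comp p := by simp
  comp_add p q p' q' _ _ := by
    refine Prod.ext ?_ rfl
    show p.1 + p'.1 + (q.1 + q'.1) = p.1 + q.1 + (p'.1 + q'.1)
    abel

end Aux

/-- The category of abelian group objects in the category of
small groupoids is equivalent to the category of chain complexes of abelian
groups concentrated in degrees 0 and 1, via the Moore complex functor
`G ↦ (ker δ₁ → G₀, δ₀)`. -/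
theorem stmt0 : Moore.IsEquivalence := by
  refine { faithful := ⟨?_⟩, full := ⟨?_⟩, essSurj := ⟨?_⟩ }
  · -- faithful
    intro G H φ ψ h
    have h0 : φ.f₀ = ψ.f₀ := congrArg Ch01Hom.f₀ h
    have h1 : ∀ a : G.tgt.ker, φ.f₁ (G.tgt.ker.subtype a) = ψ.f₁ (G.tgt.ker.subtype a) :=
      fun a => congrArg Subtype.val (DFunLike.congr_fun (congrArg Ch01Hom.f₁ h) a)
    have hsplit : ∀ f : G.C₁,
        f = G.tgt.ker.subtype (G.proj f) + G.e (G.tgt f) := by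
      intro f; rw [G.proj_subtype]; abel
    refine AbGpdHom.ext h0 ?_
    refine AddMonoidHom.ext fun f => ?_
    calc φ.f₁ f = φ.f₁ (G.tgt.ker.subtype (G.proj f)) + φ.f₁ (G.e (G.tgt f)) := by
          rw [← map_add, ← hsplit]
      _ = ψ.f₁ (G.tgt.ker.subtype (G.proj f)) + ψ.f₁ (G.e (G.tgt f)) := by
          rw [h1 (G.proj f), φ.comm_e, ψ.comm_e, h0]
      _ = ψ.f₁ f := by rw [← map_add, ← hsplit]
  · -- full
    intro G H φ
    set F₁ : G.C₁ →+ H.C₁ :=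
      H.tgt.ker.subtype.comp
          ((φ.f₁ : ↥G.tgt.ker →+ ↥H.tgt.ker).comp G.proj) +
        H.e.comp ((φ.f₀ : G.C₀ →+ H.C₀).comp G.tgt) with hF₁
    have hF₁apply : ∀ f : G.C₁,
        F₁ f = H.tgt.ker.subtype ((φ.f₁ : ↥G.tgt.ker →+ ↥H.tgt.ker) (G.proj f)) +
          H.e (φ.f₀ (G.tgt f)) := fun f => rfl
    have hker : ∀ a : ↥G.tgt.ker,
        H.tgt (H.tgt.ker.subtype ((φ.f₁ : ↥G.tgt.ker →+ ↥H.tgt.ker) a)) = 0 :=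
      fun a => ((φ.f₁ : ↥G.tgt.ker →+ ↥H.tgt.ker) a).2
    have hsrc : ∀ a : ↥G.tgt.ker,
        H.src (H.tgt.ker.subtype ((φ.f₁ : ↥G.tgt.ker →+ ↥H.tgt.ker) a)) =
          φ.f₀ (G.src (G.tgt.ker.subtype a)) := fun a => φ.comm a
    have comm_src : ∀ a, H.src (F₁ a) = φ.f₀ (G.src a) := by
      intro a
      erw [hF₁apply, map_add, hsrc, H.src_e, G.proj_subtype, map_sub, G.src_e, map_sub]
      abel
    have comm_tgt : ∀ a, H.tgt (F₁ a) = φ.f₀ (G.tgt a) := by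
      intro a
      erw [hF₁apply, map_add, hker, H.tgt_e, zero_add]
    have comm_e : ∀ x, F₁ (G.e x) = H.e (φ.f₀ x) := by
      intro x
      have hp : G.proj (G.e x) = 0 := by
        apply Subtype.ext
        show G.tgt.ker.subtype (G.proj (G.e x)) = G.tgt.ker.subtype 0
        rw [G.proj_subtype, G.tgt_e, map_zero, sub_self]
      erw [hF₁apply, hp, map_zero, map_zero, zero_add, G.tgt_e]
    refine ⟨⟨φ.f₀, F₁, comm_src, comm_tgt, comm_e, ?_⟩, ?_⟩
    · intro f g hfg
      have hH : H.src (F₁ f) = H.tgt (F₁ g) := by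
        rw [comm_src, comm_tgt, hfg]
      rw [G.comp_eq f g hfg, H.comp_eq _ _ hH, map_sub, map_add, comm_e, comm_src]
    · refine Ch01Hom.ext rfl ?_
      refine AddMonoidHom.ext fun a => ?_
      apply Subtype.ext
      have ha : G.tgt (G.tgt.ker.subtype a) = 0 := a.2
      have hp : G.proj (G.tgt.ker.subtype a) = a := by
        apply Subtype.ext
        show G.tgt.ker.subtype (G.proj (G.tgt.ker.subtype a)) = G.tgt.ker.subtype a
        rw [G.proj_subtype, ha, map_zero, sub_zero]
      show F₁ (G.tgt.ker.subtype a) =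
        H.tgt.ker.subtype ((φ.f₁ : ↥G.tgt.ker →+ ↥H.tgt.ker) a)
      erw [hF₁apply, hp, ha, map_zero, map_zero, add_zero]
  · -- essentially surjective
    intro C
    refine ⟨InvObj C, ⟨?_⟩⟩
    have mem0 : ∀ a : ↥(InvObj C).tgt.ker, (a.val).2 = (0 : C.F₀) := fun a => a.2
    refine ⟨⟨AddMonoidHom.id _,
        (AddMonoidHom.fst C.F₁ C.F₀).comp (InvObj C).tgt.ker.subtype, ?_⟩,
      ⟨AddMonoidHom.id _,
        AddMonoidHom.codRestrict ((AddMonoidHom.id C.F₁).prod 0) _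
          (fun k => rfl), ?_⟩, ?_, ?_⟩
    · intro a
      show C.d ((a.val).1) = (a.val).2 + C.d ((a.val).1)
      erw [mem0 a, zero_add]
    · intro k
      show (0 : C.F₀) + C.d k = C.d k
      rw [zero_add]
    · refine Ch01Hom.ext rfl ?_
      refine AddMonoidHom.ext fun a => ?_
      apply Subtype.ext
      show (((a.val).1, (0 : C.F₀)) : C.F₁ × C.F₀) = a.val
      refine Prod.ext rfl ?_
      exact (mem0 a).symm
    · refine Ch01Hom.ext rfl ?_
      exact AddMonoidHom.ext fun k => rfl
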